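/- Let p be a projection and e an effect on a complex Hilbert space H, with cosine c, sine s, off-diagonal part d := pep⊥ + p⊥ep, and b := (d²)^{1/2}. Suppose p and e are in generic position, i.e., d has dense range in H. Then: (i) c and s have dense range; (ii) ran(p) ∩ ker(1−e) = {0}, ran(p) ∩ ker(e) = {0}, ker(p) ∩ ker(1−e) = {0}, and ker(p) ∩ ker(e) = {0}; (iii) every self-adjoint k with k² = 1 and d = bk = kb satisfies kpk = 1 − p. -/

import Mathlib

noncomputable section Stmt16Aux

open Polynomial

variable {H : Type*} [NormedAddCommGroup H] [InnerProductSpace ℂ H] [CompleteSpace H]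

local notation "⟪" x ", " y "⟫" => @inner ℂ _ _ x y

private lemma sa_inner {T : H →L[ℂ] H} (hT : IsSelfAdjoint T) (x y : H) :
    ⟪T x, y⟫ = ⟪x, T y⟫ := by
  conv_lhs => rw [← ContinuousLinearMap.isSelfAdjoint_iff'.mp hT]
  exact ContinuousLinearMap.adjoint_inner_left T y x

private lemma pos_re_inner_nonneg {T : H →L[ℂ] H} (hT : 0 ≤ T) (x : H) :
    0 ≤ RCLike.re ⟪T x, x⟫ :=
  (RCLike.nonneg_iff.mp (((ContinuousLinearMap.nonneg_iff_isPositive T).mp hT).inner_nonneg_left x)).1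

private lemma sqrt_mul_self_cfc {T : H →L[ℂ] H} (hT : 0 ≤ T) :
    cfc Real.sqrt T * cfc Real.sqrt T = T := by
  have hTsa : IsSelfAdjoint T := .of_nonneg hT
  rw [← cfc_mul Real.sqrt Real.sqrt T Real.continuous_sqrt.continuousOn
    Real.continuous_sqrt.continuousOn]
  have heq : Set.EqOn (fun y : ℝ => Real.sqrt y * Real.sqrt y) (id : ℝ → ℝ) (spectrum ℝ T) :=
    fun y hy => Real.mul_self_sqrt (spectrum_nonneg_of_nonneg hT hy)
  rw [cfc_congr heq, cfc_id ℝ T]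

private lemma apply_eq_zero_of_pos {T : H →L[ℂ] H} (hT : 0 ≤ T) {x : H}
    (h : RCLike.re ⟪T x, x⟫ = 0) : T x = 0 := by
  set r := cfc Real.sqrt T with hr
  have hr0 : 0 ≤ r := cfc_nonneg fun y _ => Real.sqrt_nonneg y
  have hrsa : IsSelfAdjoint r := .of_nonneg hr0
  have hrr : r * r = T := sqrt_mul_self_cfc hT
  have key : ⟪T x, x⟫ = ⟪r x, r x⟫ := by
    conv_lhs => rw [← hrr]
    rw [ContinuousLinearMap.mul_apply]
    exact sa_inner hrsa (r x) x
  have hnorm : RCLike.re ⟪r x, r x⟫ = 0 := by rw [← key]; exact h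
  rw [inner_self_eq_norm_sq] at hnorm
  have hrx : r x = 0 := norm_eq_zero.mp (by nlinarith [norm_nonneg (r x)])
  calc T x = (r * r) x := by rw [hrr]
    _ = r (r x) := rfl
    _ = 0 := by rw [hrx, map_zero]

private lemma commute_cfc {a w : H →L[ℂ] H} (ha : IsSelfAdjoint a) (h : Commute w a)
    (f : ℝ → ℝ) : Commute w (cfc f a) := by
  by_cases hf : ContinuousOn f (spectrum ℝ a)
  · rw [cfc_apply f a ha hf]
    set s := spectrum ℝ a with hs
    -- the set of continuous functions commuting with w under cfcHom
    set S : Set C(s, ℝ) := {g | Commute w (cfcHom ha g)} with hS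
    have hpoly : ∀ P : ℝ[X], Commute w (Polynomial.aeval a P) := by
      intro P
      induction P using Polynomial.induction_on with
      | C r => simpa [Commute, SemiconjBy] using (Algebra.commutes r w).symm
      | add P Q hP hQ => simpa [map_add] using hP.add_right hQ
      | monomial n r hn =>
        simp only [map_mul, Polynomial.aeval_C, map_pow, Polynomial.aeval_X]
        have h1 : Commute w ((algebraMap ℝ (H →L[ℂ] H)) r) := (Algebra.commutes r w).symm
        exact h1.mul_right (h.pow_right (n + 1))
    have hsub : (polynomialFunctions s : Set C(s, ℝ)) ⊆ S := by
      rw [polynomialFunctions_coe]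
      rintro g ⟨P, rfl⟩
      have hXa : cfcHom ha ((X : ℝ[X]).toContinuousMapOn s) = a := by
        rw [toContinuousMapOn_X_eq_restrict_id]
        exact cfcHom_id ha
      have : (cfcHom ha).toAlgHom.comp (toContinuousMapOnAlgHom s) =
          Polynomial.aeval a := by
        apply Polynomial.algHom_ext
        simpa using hXa
      have happ : cfcHom ha (toContinuousMapOnAlgHom s P) = Polynomial.aeval a P := by
        have := congrFun (congrArg DFunLike.coe this) P
        simpa using this
      show Commute w (cfcHom ha _)
      rw [happ]
      exact hpoly P
    have hclosed : IsClosed S := by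
      have hcont : Continuous (cfcHom ha (R := ℝ)) := (cfcHom_isClosedEmbedding ha).continuous
      exact isClosed_eq (continuous_const.mul hcont) (hcont.mul continuous_const)
    have hdense : closure (polynomialFunctions s : Set C(s, ℝ)) = Set.univ := by
      have := polynomialFunctions.topologicalClosure s
      calc closure (polynomialFunctions s : Set C(s, ℝ))
          = ((polynomialFunctions s).topologicalClosure : Set C(s, ℝ)) :=
            (Subalgebra.topologicalClosure_coe _).symm
        _ = Set.univ := by rw [this]; rfl
    have : (Set.univ : Set C(s, ℝ)) ⊆ S := by
      rw [← hdense]; exact closure_minimal hsub hclosed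
    exact this (Set.mem_univ _)
  · rw [cfc_apply_of_not_continuousOn a hf]
    exact Commute.zero_right w

private lemma mul_nonneg_of_commute {u v : H →L[ℂ] H} (hu : 0 ≤ u) (hv : 0 ≤ v)
    (huv : Commute u v) : 0 ≤ u * v := by
  set r := cfc Real.sqrt u with hr
  have hr0 : 0 ≤ r := cfc_nonneg fun y _ => Real.sqrt_nonneg y
  have hrsa : IsSelfAdjoint r := .of_nonneg hr0
  have husa : IsSelfAdjoint u := .of_nonneg hu
  have hrr : r * r = u := sqrt_mul_self_cfc hu
  have hcomm : Commute v r := commute_cfc husa huv.symm Real.sqrt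
  calc (0 : H →L[ℂ] H) ≤ star r * v * r := star_left_conjugate_nonneg hv r
    _ = r * (v * r) := by rw [hrsa.star_eq, mul_assoc]
    _ = r * (r * v) := by rw [hcomm.eq]
    _ = u * v := by rw [← mul_assoc, hrr]

end Stmt16Aux

local notation "⟪" x ", " y "⟫" => @inner ℂ _ _ x y

/-- In `B(H)`, let `p` be a projection and `e` an effect, with cosine
`c` and sine `s` (encoded as the nonnegative square roots of `pep + p⊥e⊥p⊥` and
`pe⊥p + p⊥ep⊥`), off-diagonal part `d := pep⊥ + p⊥ep`, and `b := (d²)^{1/2}`.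
Suppose `p` and `e` are in generic position, i.e. `d` has dense range. Then:
(i) `c` and `s` have dense range;
(ii) `ran p ∩ ker(1−e) = 0`, `ran p ∩ ker e = 0`, `ker p ∩ ker(1−e) = 0`,
`ker p ∩ ker e = 0`;
(iii) every self-adjoint `k` with `k² = 1` and `d = bk = kb` satisfies `kpk = 1 − p`. -/
theorem stmt16 {H : Type*} [NormedAddCommGroup H] [InnerProductSpace ℂ H] [CompleteSpace H]
    (p e c s b : H →L[ℂ] H)
    (hp : IsSelfAdjoint p) (hp2 : p ^ 2 = p)
    (he0 : 0 ≤ e) (he1 : e ≤ 1)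
    (hc0 : 0 ≤ c) (hc2 : c ^ 2 = p * e * p + (1 - p) * (1 - e) * (1 - p))
    (hs0 : 0 ≤ s) (hs2 : s ^ 2 = p * (1 - e) * p + (1 - p) * e * (1 - p))
    (hb0 : 0 ≤ b) (hb2 : b ^ 2 = (p * e * (1 - p) + (1 - p) * e * p) ^ 2)
    (hgen : DenseRange (p * e * (1 - p) + (1 - p) * e * p : H →L[ℂ] H)) :
    (DenseRange c ∧ DenseRange s) ∧
    (LinearMap.range (p : H →ₗ[ℂ] H) ⊓ LinearMap.ker ((1 - e : H →L[ℂ] H) : H →ₗ[ℂ] H) = ⊥ ∧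
      LinearMap.range (p : H →ₗ[ℂ] H) ⊓ LinearMap.ker (e : H →ₗ[ℂ] H) = ⊥ ∧
      LinearMap.ker (p : H →ₗ[ℂ] H) ⊓ LinearMap.ker ((1 - e : H →L[ℂ] H) : H →ₗ[ℂ] H) = ⊥ ∧
      LinearMap.ker (p : H →ₗ[ℂ] H) ⊓ LinearMap.ker (e : H →ₗ[ℂ] H) = ⊥) ∧
    ∀ k : H →L[ℂ] H, IsSelfAdjoint k → k ^ 2 = 1 →
      p * e * (1 - p) + (1 - p) * e * p = b * k →
      p * e * (1 - p) + (1 - p) * e * p = k * b →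
      k * p * k = 1 - p := by
  classical
  set d : H →L[ℂ] H := p * e * (1 - p) + (1 - p) * e * p with hd_def
  have hesa : IsSelfAdjoint e := .of_nonneg he0
  have hpp : p * p = p := by rw [← sq]; exact hp2
  have hppx : ∀ y : H, p (p y) = p y := fun y => by
    rw [← ContinuousLinearMap.mul_apply, hpp]
  have hp' : IsSelfAdjoint (1 - p : H →L[ℂ] H) := (IsSelfAdjoint.one (H →L[ℂ] H)).sub hp
  have hpq : p * (1 - p) = 0 := by rw [mul_sub, mul_one, hpp, sub_self]
  have hqp : (1 - p) * p = 0 := by rw [sub_mul, one_mul, hpp, sub_self]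
  have hqq : (1 - p) * (1 - p) = (1 - p) := by rw [mul_sub, mul_one, hqp, sub_zero]
  have hdsa : IsSelfAdjoint d := by
    rw [hd_def, IsSelfAdjoint]
    simp [star_add, star_mul, star_sub, star_one, hp.star_eq, hesa.star_eq, mul_assoc, add_comm]
  -- the kernel of d is trivial
  have hker : ∀ x : H, d x = 0 → x = 0 := by
    intro x hx
    have hx' : x ∈ (LinearMap.range (d : H →ₗ[ℂ] H))ᗮ := by
      rw [Submodule.mem_orthogonal]
      intro u hu
      obtain ⟨y, rfl⟩ := LinearMap.mem_range.mp hu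
      rw [ContinuousLinearMap.coe_coe, sa_inner hdsa y x, hx, inner_zero_right]
    have horth : (LinearMap.range (d : H →ₗ[ℂ] H))ᗮ = ⊥ := by
      rw [← Submodule.topologicalClosure_eq_top_iff]
      have hdense : Dense ((LinearMap.range (d : H →ₗ[ℂ] H) : Submodule ℂ H) : Set H) := by
        have : ((LinearMap.range (d : H →ₗ[ℂ] H) : Submodule ℂ H) : Set H) = Set.range d := by
          ext z; simp [LinearMap.mem_range]
        rw [this]; exact hgen
      rw [← SetLike.coe_set_eq, Submodule.topologicalClosure_coe, Submodule.top_coe,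
        ← dense_iff_closure_eq]
      exact hdense
    rw [horth] at hx'
    simpa using hx'
  -- splitting a vanishing sum of two nonneg quadratic forms
  have split : ∀ (T S : H →L[ℂ] H), 0 ≤ T → 0 ≤ S → ∀ x : H, (T + S) x = 0 →
      RCLike.re ⟪T x, x⟫ = 0 ∧ RCLike.re ⟪S x, x⟫ = 0 := by
    intro T S hT hS x hx
    have h1 := pos_re_inner_nonneg hT x
    have h2 := pos_re_inner_nonneg hS x
    have hsum : RCLike.re ⟪T x, x⟫ + RCLike.re ⟪S x, x⟫ = 0 := by
      have : ⟪T x, x⟫ + ⟪S x, x⟫ = 0 := by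
        rw [← inner_add_left, ← ContinuousLinearMap.add_apply, hx, inner_zero_left]
      calc RCLike.re ⟪T x, x⟫ + RCLike.re ⟪S x, x⟫ = RCLike.re (⟪T x, x⟫ + ⟪S x, x⟫) :=
            (map_add _ _ _).symm
        _ = 0 := by rw [this, map_zero]
    constructor <;> linarith
  have conj_inner : ∀ (P E' : H →L[ℂ] H), IsSelfAdjoint P → ∀ x : H,
      ⟪(P * E' * P) x, x⟫ = ⟪E' (P x), P x⟫ := by
    intro P E' hP x
    have h1 : (P * E' * P) x = P (E' (P x)) := rfl
    rw [h1]
    exact sa_inner hP (E' (P x)) x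
  have hTpos : (0 : H →L[ℂ] H) ≤ p * e * p := by
    have := star_left_conjugate_nonneg he0 p; rwa [hp.star_eq] at this
  have h1e : (0 : H →L[ℂ] H) ≤ 1 - e := sub_nonneg.mpr he1
  have hSpos : (0 : H →L[ℂ] H) ≤ (1 - p) * (1 - e) * (1 - p) := by
    have := star_left_conjugate_nonneg h1e (1 - p); rwa [hp'.star_eq] at this
  have hTpos' : (0 : H →L[ℂ] H) ≤ p * (1 - e) * p := by
    have := star_left_conjugate_nonneg h1e p; rwa [hp.star_eq] at this
  have hSpos' : (0 : H →L[ℂ] H) ≤ (1 - p) * e * (1 - p) := by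
    have := star_left_conjugate_nonneg he0 (1 - p); rwa [hp'.star_eq] at this
  -- kernel of c^2 is trivial
  have hkerc2 : ∀ x : H, (c ^ 2) x = 0 → x = 0 := by
    intro x hx
    rw [hc2] at hx
    obtain ⟨h1, h2⟩ := split _ _ hTpos hSpos x hx
    rw [conj_inner p e hp x] at h1
    rw [conj_inner (1 - p) (1 - e) hp' x] at h2
    have hepx : e (p x) = 0 := apply_eq_zero_of_pos he0 h1
    have he'qx : (1 - e : H →L[ℂ] H) ((1 - p : H →L[ℂ] H) x) = 0 := apply_eq_zero_of_pos h1e h2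
    have heqx : e ((1 - p : H →L[ℂ] H) x) = (1 - p : H →L[ℂ] H) x := by
      have h9 : (1 - p : H →L[ℂ] H) x - e ((1 - p : H →L[ℂ] H) x) = 0 := by
        simpa [ContinuousLinearMap.sub_apply, ContinuousLinearMap.one_apply] using he'qx
      exact (sub_eq_zero.mp h9).symm
    have hdx : d x = 0 := by
      have : d x = p (e ((1 - p : H →L[ℂ] H) x)) + (1 - p : H →L[ℂ] H) (e (p x)) := rfl
      rw [this, hepx, map_zero, add_zero, heqx]
      have : p ((1 - p : H →L[ℂ] H) x) = ((p * (1 - p)) : H →L[ℂ] H) x := rfl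
      rw [this, hpq]; rfl
    exact hker x hdx
  -- kernel of s^2 is trivial
  have hkers2 : ∀ x : H, (s ^ 2) x = 0 → x = 0 := by
    intro x hx
    rw [hs2] at hx
    obtain ⟨h1, h2⟩ := split _ _ hTpos' hSpos' x hx
    rw [conj_inner p (1 - e) hp x] at h1
    rw [conj_inner (1 - p) e hp' x] at h2
    have he'px : (1 - e : H →L[ℂ] H) (p x) = 0 := apply_eq_zero_of_pos h1e h1
    have hepx : e (p x) = p x := by
      have h9 : p x - e (p x) = 0 := by
        simpa [ContinuousLinearMap.sub_apply, ContinuousLinearMap.one_apply] using he'px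
      exact (sub_eq_zero.mp h9).symm
    have heqx : e ((1 - p : H →L[ℂ] H) x) = 0 := apply_eq_zero_of_pos he0 h2
    have hdx : d x = 0 := by
      have h0 : d x = p (e ((1 - p : H →L[ℂ] H) x)) + (1 - p : H →L[ℂ] H) (e (p x)) := rfl
      rw [h0, heqx, map_zero, zero_add, hepx]
      have : (1 - p : H →L[ℂ] H) (p x) = ((1 - p) * p : H →L[ℂ] H) x := rfl
      rw [this, hqp]; rfl
    exact hker x hdx
  have hkerc : ∀ x : H, c x = 0 → x = 0 := by
    intro x hx
    refine hkerc2 x ?_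
    rw [sq, ContinuousLinearMap.mul_apply, hx, map_zero]
  have hkers : ∀ x : H, s x = 0 → x = 0 := by
    intro x hx
    refine hkers2 x ?_
    rw [sq, ContinuousLinearMap.mul_apply, hx, map_zero]
  -- dense range from selfadjoint + trivial kernel
  have hdense : ∀ T : H →L[ℂ] H, IsSelfAdjoint T → (∀ x : H, T x = 0 → x = 0) → DenseRange T := by
    intro T hT hkT
    have horth : (LinearMap.range (T : H →ₗ[ℂ] H))ᗮ = ⊥ := by
      rw [Submodule.eq_bot_iff]
      intro x hx
      apply hkT
      have := (Submodule.mem_orthogonal _ x).mp hx (T (T x)) (LinearMap.mem_range_self _ (T x))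
      rw [sa_inner hT] at this
      exact inner_self_eq_zero.mp this
    have hclos := Submodule.topologicalClosure_eq_top_iff.mpr horth
    have : Dense ((LinearMap.range (T : H →ₗ[ℂ] H) : Submodule ℂ H) : Set H) := by
      rw [dense_iff_closure_eq, ← Submodule.topologicalClosure_coe, hclos]; rfl
    have hcoe : ((LinearMap.range (T : H →ₗ[ℂ] H) : Submodule ℂ H) : Set H) = Set.range T := by
      ext z; simp [LinearMap.mem_range]
    rwa [hcoe] at this
  have hcsa : IsSelfAdjoint c := .of_nonneg hc0
  have hssa : IsSelfAdjoint s := .of_nonneg hs0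
  refine ⟨⟨hdense c hcsa hkerc, hdense s hssa hkers⟩, ⟨?_, ?_, ?_, ?_⟩, ?_⟩
  -- (ii) four intersections
  · rw [Submodule.eq_bot_iff]
    rintro x hx
    obtain ⟨hx1, hx2⟩ := Submodule.mem_inf.mp hx
    obtain ⟨y, hy⟩ := LinearMap.mem_range.mp hx1
    have hpx : p x = x := by rw [← hy]; exact hppx y
    have hex : e x = x := by
      have := LinearMap.mem_ker.mp hx2
      have h2 : x - e x = 0 := by
        simpa [ContinuousLinearMap.sub_apply, ContinuousLinearMap.one_apply] using this
      exact (sub_eq_zero.mp h2).symm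
    refine hkers2 x ?_
    rw [hs2]
    have h0 : (p * (1 - e) * p + (1 - p) * e * (1 - p) : H →L[ℂ] H) x
        = p ((1 - e : H →L[ℂ] H) (p x)) + (1 - p : H →L[ℂ] H) (e ((1 - p : H →L[ℂ] H) x)) := rfl
    rw [h0, hpx]
    have h1 : (1 - e : H →L[ℂ] H) x = 0 := by
      simp [ContinuousLinearMap.sub_apply, ContinuousLinearMap.one_apply, hex]
    have h2 : (1 - p : H →L[ℂ] H) x = 0 := by
      simp [ContinuousLinearMap.sub_apply, ContinuousLinearMap.one_apply, hpx]
    rw [h1, h2, map_zero, map_zero, map_zero, add_zero]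
  · rw [Submodule.eq_bot_iff]
    rintro x hx
    obtain ⟨hx1, hx2⟩ := Submodule.mem_inf.mp hx
    obtain ⟨y, hy⟩ := LinearMap.mem_range.mp hx1
    have hpx : p x = x := by rw [← hy]; exact hppx y
    have hex : e x = 0 := LinearMap.mem_ker.mp hx2
    refine hkerc2 x ?_
    rw [hc2]
    have h0 : (p * e * p + (1 - p) * (1 - e) * (1 - p) : H →L[ℂ] H) x
        = p (e (p x)) + (1 - p : H →L[ℂ] H) ((1 - e : H →L[ℂ] H) ((1 - p : H →L[ℂ] H) x)) := rfl
    have h2 : (1 - p : H →L[ℂ] H) x = 0 := by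
      simp [ContinuousLinearMap.sub_apply, ContinuousLinearMap.one_apply, hpx]
    rw [h0, hpx, hex, map_zero, h2, map_zero, map_zero, add_zero]
  · rw [Submodule.eq_bot_iff]
    rintro x hx
    obtain ⟨hx1, hx2⟩ := Submodule.mem_inf.mp hx
    have hpx : p x = 0 := LinearMap.mem_ker.mp hx1
    have hex : e x = x := by
      have := LinearMap.mem_ker.mp hx2
      have h2 : x - e x = 0 := by
        simpa [ContinuousLinearMap.sub_apply, ContinuousLinearMap.one_apply] using this
      exact (sub_eq_zero.mp h2).symm
    refine hkerc2 x ?_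
    rw [hc2]
    have h0 : (p * e * p + (1 - p) * (1 - e) * (1 - p) : H →L[ℂ] H) x
        = p (e (p x)) + (1 - p : H →L[ℂ] H) ((1 - e : H →L[ℂ] H) ((1 - p : H →L[ℂ] H) x)) := rfl
    have h2 : (1 - p : H →L[ℂ] H) x = x := by
      simp [ContinuousLinearMap.sub_apply, ContinuousLinearMap.one_apply, hpx]
    have h3 : (1 - e : H →L[ℂ] H) x = 0 := by
      simp [ContinuousLinearMap.sub_apply, ContinuousLinearMap.one_apply, hex]
    rw [h0, hpx, map_zero, map_zero, h2, h3, map_zero, add_zero]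
  · rw [Submodule.eq_bot_iff]
    rintro x hx
    obtain ⟨hx1, hx2⟩ := Submodule.mem_inf.mp hx
    have hpx : p x = 0 := LinearMap.mem_ker.mp hx1
    have hex : e x = 0 := LinearMap.mem_ker.mp hx2
    refine hkers2 x ?_
    rw [hs2]
    have h0 : (p * (1 - e) * p + (1 - p) * e * (1 - p) : H →L[ℂ] H) x
        = p ((1 - e : H →L[ℂ] H) (p x)) + (1 - p : H →L[ℂ] H) (e ((1 - p : H →L[ℂ] H) x)) := rfl
    have h2 : (1 - p : H →L[ℂ] H) x = x := by
      simp [ContinuousLinearMap.sub_apply, ContinuousLinearMap.one_apply, hpx]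
    rw [h0, hpx, map_zero, map_zero, h2, hex, map_zero, add_zero]
  -- (iii)
  · intro k hk hk2 hbk hkb
    have hkk : k * k = 1 := by rw [← sq]; exact hk2
    -- kernel of b is trivial
    have hkerb : ∀ x : H, b x = 0 → x = 0 := by
      intro x hbx
      have hb2x : (b ^ 2) x = 0 := by
        rw [sq, ContinuousLinearMap.mul_apply, hbx, map_zero]
      rw [hb2] at hb2x
      have hdx : d x = 0 := by
        have h6 : ⟪d x, d x⟫ = 0 := by
          have h7 : ⟪d (d x), x⟫ = ⟪d x, d x⟫ := sa_inner hdsa (d x) x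
          have h8 : d (d x) = (d ^ 2) x := by rw [sq]; rfl
          rw [← h7, h8, hd_def, hb2x, inner_zero_left]
        exact inner_self_eq_zero.mp h6
      exact hker x hdx
    -- diagonal/off-diagonal relations
    have E1 : p * d = d * (1 - p) := by
      have l1 : p * d = p * e * (1 - p) := by
        rw [hd_def, mul_add]
        have a1 : p * (p * e * (1 - p)) = p * e * (1 - p) := by
          simp only [← mul_assoc]; rw [hpp]
        have a2 : p * ((1 - p) * e * p) = 0 := by
          simp only [← mul_assoc]; rw [hpq, zero_mul, zero_mul]
        rw [a1, a2, add_zero]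
      have l2 : d * (1 - p) = p * e * (1 - p) := by
        rw [hd_def, add_mul]
        have a1 : p * e * (1 - p) * (1 - p) = p * e * (1 - p) := by
          rw [mul_assoc, hqq]
        have a2 : (1 - p) * e * p * (1 - p) = 0 := by
          rw [mul_assoc, hpq, mul_zero]
        rw [a1, a2, add_zero]
      rw [l1, l2]
    have E2 : d * p = (1 - p) * d := by
      have l1 : d * p = (1 - p) * e * p := by
        rw [hd_def, add_mul]
        have a1 : p * e * (1 - p) * p = 0 := by rw [mul_assoc, hqp, mul_zero]
        have a2 : (1 - p) * e * p * p = (1 - p) * e * p := by rw [mul_assoc, hpp]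
        rw [a1, a2, zero_add]
      have l2 : (1 - p) * d = (1 - p) * e * p := by
        rw [hd_def, mul_add]
        have a1 : (1 - p) * (p * e * (1 - p)) = 0 := by
          simp only [← mul_assoc]; rw [hqp, zero_mul, zero_mul]
        have a2 : (1 - p) * ((1 - p) * e * p) = (1 - p) * e * p := by
          simp only [← mul_assoc]; rw [hqq]
        rw [a1, a2, zero_add]
      rw [l1, l2]
    set q : H →L[ℂ] H := k * p * k with hq_def
    have hq : k * (1 - p) * k = 1 - q := by
      rw [hq_def, mul_sub, mul_one, sub_mul, hkk]
    have h1 : p * (b * k) = b * k * (1 - p) := by rw [← hbk]; exact E1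
    have h2 : k * b * p = (1 - p) * (k * b) := by rw [← hkb]; exact E2
    have hpb : p * b = b * (1 - q) := by
      calc p * b = p * (b * k) * k := by
            rw [mul_assoc, mul_assoc, hkk, mul_one]
        _ = b * k * (1 - p) * k := by rw [h1]
        _ = b * (k * (1 - p) * k) := by simp only [mul_assoc]
        _ = b * (1 - q) := by rw [hq]
    have hbp : b * p = (1 - q) * b := by
      calc b * p = k * (k * b * p) := by
            rw [← mul_assoc, ← mul_assoc, hkk, one_mul]
        _ = k * ((1 - p) * (k * b)) := by rw [h2]
        _ = k * (1 - p) * k * b := by simp only [mul_assoc]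
        _ = (1 - q) * b := by rw [hq]
    have hqb : q * b = b * (1 - p) := by
      rw [mul_sub, mul_one, hbp, sub_mul, one_mul, sub_sub_cancel]
    set t : H →L[ℂ] H := p + q - 1 with ht_def
    have htsa : IsSelfAdjoint t := by
      rw [ht_def, IsSelfAdjoint]
      simp [star_sub, star_add, star_one, star_mul, hp.star_eq, hk.star_eq, hq_def, mul_assoc]
    have htb : t * b = -(b * t) := by
      have e1 : t * b = b * (1 - q) + b * (1 - p) - b := by
        rw [ht_def, sub_mul, add_mul, one_mul, hpb, hqb]
      rw [e1, ht_def]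
      noncomm_ring
    have hu0 : (0 : H →L[ℂ] H) ≤ t * t := by
      have := star_mul_self_nonneg t; rwa [htsa.star_eq] at this
    have htbt : (0 : H →L[ℂ] H) ≤ t * b * t := by
      have := star_left_conjugate_nonneg hb0 t; rwa [htsa.star_eq] at this
    have htb' : b * t = -(t * b) := by rw [htb, neg_neg]
    have h3 : b * (t * t) = -(t * b * t) := by
      rw [← mul_assoc, htb', neg_mul]
    have hcm : (t * t) * b = b * (t * t) := by
      rw [mul_assoc, htb, mul_neg, ← mul_assoc, htb, neg_mul, neg_neg, mul_assoc]
    have hbtt_le : b * (t * t) ≤ 0 := by rw [h3]; exact neg_nonpos.mpr htbt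
    have hbtt_ge : (0 : H →L[ℂ] H) ≤ b * (t * t) :=
      mul_nonneg_of_commute hb0 hu0 hcm.symm
    have hbu : b * (t * t) = 0 := le_antisymm hbtt_le hbtt_ge
    have htbt0 : t * b * t = 0 := by
      rw [hbu] at h3
      exact neg_eq_zero.mp h3.symm
    have ht0 : t = 0 := by
      ext x
      have h5 : RCLike.re ⟪b (t x), t x⟫ = 0 := by
        have heq : ⟪b (t x), t x⟫ = ⟪(t * b * t) x, x⟫ := by
          have h7 : (t * b * t) x = t (b (t x)) := rfl
          rw [h7]
          exact (sa_inner htsa (b (t x)) x).symm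
        rw [heq, htbt0]
        simp
      have hbt : b (t x) = 0 := apply_eq_zero_of_pos hb0 h5
      have : t x = 0 := hkerb _ hbt
      simpa using this
    have : q = 1 - p := by
      have h8 : p + q - 1 = 0 := by rw [← ht_def]; exact ht0
      calc q = (p + q - 1) + (1 - p) := by abel
        _ = 1 - p := by rw [h8, zero_add]
    exact this
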